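/- Let Sh = sw_π H(2,4) be the Shrikhande graph, obtained from the Hamming graph H(2,4) by Godsil–McKay switching with respect to the partition π = {C, V \ C}, where C = {(x,x) : x ∈ [4]}. For every n ≥ 0, the Doob graph D(1,n) = Sh □ K₄ □ ⋯ □ K₄ (n copies of K₄) is isomorphic to sw_Π H(n+2, 4), where H(n+2,4) is realized as H(2,4) □ H(n,4) and Π = {C × {w} : w ∈ V(H(n,4))} ∪ {(V \ C) × V(H(n,4))} is the induced Godsil–McKay partition. -/

import Mathlib

open Classical Matrix Kronecker

/-- The number of neighbors of `x` inside the set `c`. -/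
noncomputable def nbrCount {V : Type*} (G : SimpleGraph V) (x : V) (c : Finset V) : ℕ :=
  (c.filter fun y => G.Adj x y).card

/-- `{C i} ∪ {D}` is a partition of the vertex set (all cells nonempty, pairwise
disjoint, covering). -/
def IsPartitionWithCell {V ι : Type*} (C : ι → Finset V) (D : Finset V) : Prop :=
  (∀ i, (C i).Nonempty) ∧ D.Nonempty ∧
    Pairwise (fun i j => Disjoint (C i) (C j)) ∧
    (∀ i, Disjoint (C i) D) ∧ ∀ x : V, x ∈ D ∨ ∃ i, x ∈ C i

/-- The family of cells `C` is equitable for `G` : any two vertices of a cell `C i`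
have the same number of neighbors in each cell `C j`. -/
def IsEquitableOn {V ι : Type*} (G : SimpleGraph V) (C : ι → Finset V) : Prop :=
  ∀ i j, ∀ x ∈ C i, ∀ y ∈ C i, nbrCount G x (C j) = nbrCount G y (C j)

/-- Every vertex of `D` has `0`, `|C i|/2` or `|C i|` neighbors in each cell `C i`. -/
def GMhalf {V ι : Type*} (G : SimpleGraph V) (C : ι → Finset V) (D : Finset V) : Prop :=
  ∀ x ∈ D, ∀ i, nbrCount G x (C i) = 0 ∨ 2 * nbrCount G x (C i) = (C i).card ∨
    nbrCount G x (C i) = (C i).card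

/-- `π = {C₁, …, C_t, D}` is a Godsil–McKay partition of `G` with Godsil–McKay cell `D`. -/
def IsGMPartition {V ι : Type*} (G : SimpleGraph V) (C : ι → Finset V) (D : Finset V) : Prop :=
  IsPartitionWithCell C D ∧ IsEquitableOn G C ∧ GMhalf G C D

/-- The graph obtained from `G` by Godsil–McKay switching with respect to the
partition `{C₁, …, C_t, D}` : adjacency and nonadjacency between `x ∈ D` and the
vertices of `C i` are interchanged whenever `x` has exactly `|C i|/2` neighbors in `C i`. -/
def GMswitch {V ι : Type*} (G : SimpleGraph V) (C : ι → Finset V) (D : Finset V) :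
    SimpleGraph V where
  Adj x y := x ≠ y ∧ Xor' (G.Adj x y)
    (∃ i, (x ∈ D ∧ y ∈ C i ∧ 2 * nbrCount G x (C i) = (C i).card) ∨
          (y ∈ D ∧ x ∈ C i ∧ 2 * nbrCount G y (C i) = (C i).card))
  symm := by
    refine ⟨?_⟩
    rintro x y ⟨hne, h⟩
    refine ⟨hne.symm, ?_⟩
    have h1 : (G.Adj y x) = (G.Adj x y) := propext (G.adj_comm y x)
    have h2 : (∃ i, (y ∈ D ∧ x ∈ C i ∧ 2 * nbrCount G y (C i) = (C i).card) ∨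
          (x ∈ D ∧ y ∈ C i ∧ 2 * nbrCount G x (C i) = (C i).card)) =
        (∃ i, (x ∈ D ∧ y ∈ C i ∧ 2 * nbrCount G x (C i) = (C i).card) ∨
          (y ∈ D ∧ x ∈ C i ∧ 2 * nbrCount G y (C i) = (C i).card)) :=
      propext (exists_congr fun i => or_comm)
    rw [h1, h2]
    exact h
  loopless := ⟨by rintro x ⟨hne, -⟩; exact hne rfl⟩

/-- The adjacency matrix of a graph, with rational entries. -/
noncomputable def adjM {V : Type*} (G : SimpleGraph V) : Matrix V V ℚ :=
  Matrix.of fun x y => if G.Adj x y then 1 else 0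

/-- The all-one matrix. -/
def allOnes (V : Type*) : Matrix V V ℚ := Matrix.of fun _ _ => 1

/-- The switching matrix `Q` of the partition `{C₁, …, C_t, D}` :
`Q x y = 2/|C i| - δ_{x y}` if `x, y ∈ C i`, `Q x y = δ_{x y}` if `x, y ∈ D`,
and `Q x y = 0` otherwise. -/
noncomputable def switchMatrix {V ι : Type*} (C : ι → Finset V) (D : Finset V) :
    Matrix V V ℚ :=
  Matrix.of fun x y =>
    if h : ∃ i, x ∈ C i ∧ y ∈ C i then
      2 / ((C h.choose).card : ℚ) - (if x = y then 1 else 0)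
    else if x ∈ D ∧ y ∈ D then (if x = y then 1 else 0) else 0

/-- The characteristic matrix of a family of cells: `S x i = 1` iff `x ∈ C i`. -/
noncomputable def charMat {V ι : Type*} (C : ι → Finset V) : Matrix V ι ℚ :=
  Matrix.of fun x i => if x ∈ C i then 1 else 0

/-- `A₀ = I`, `A₁ = A(G)`, `A₂ = J - I - A(G)`. -/
noncomputable def stdMats {V : Type*} [DecidableEq V] (G : SimpleGraph V) :
    Fin 3 → Matrix V V ℚ :=
  ![1, adjM G, allOnes V - 1 - adjM G]

/-- The three basic relations: `i = 0` : equality, `i = 1` : adjacency,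
`i = 2` : distinct nonadjacency. -/
def relOfIdx {V : Type*} (G : SimpleGraph V) (i : Fin 3) (x y : V) : Prop :=
  (i = 0 ∧ x = y) ∨ (i = 1 ∧ G.Adj x y) ∨ (i = 2 ∧ x ≠ y ∧ ¬ G.Adj x y)

lemma relOfIdx_symm {V : Type*} {G : SimpleGraph V} {i : Fin 3} {x y : V}
    (h : relOfIdx G i x y) : relOfIdx G i y x := by
  rcases h with ⟨hi, h⟩ | ⟨hi, h⟩ | ⟨hi, h1, h2⟩
  · exact Or.inl ⟨hi, h.symm⟩
  · exact Or.inr (Or.inl ⟨hi, h.symm⟩)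
  · exact Or.inr (Or.inr ⟨hi, h1.symm, fun hadj => h2 hadj.symm⟩)

/-- The unified graph product of type `[0 s₀₁ s₀₂; s₁₀ s₁₁ s₁₂; s₂₀ s₂₁ s₂₂]` :
the graph on `V × W` whose adjacency matrix is `Σ_{i,j} s i j • (A_i ⊗ B_j)`. -/
def unifiedProd {V W : Type*} (G : SimpleGraph V) (H : SimpleGraph W)
    (s : Fin 3 → Fin 3 → ℚ) : SimpleGraph (V × W) where
  Adj p q := p ≠ q ∧ ∃ i j, s i j = 1 ∧ relOfIdx G i p.1 q.1 ∧ relOfIdx H j p.2 q.2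
  symm := by
    refine ⟨?_⟩
    rintro p q ⟨hne, i, j, hs, hi, hj⟩
    exact ⟨hne.symm, i, j, hs, relOfIdx_symm hi, relOfIdx_symm hj⟩
  loopless := ⟨by rintro p ⟨hne, -⟩; exact hne rfl⟩

/-- The Hamming graph `H(2,4) = K₄ □ K₄`. -/
def H24 : SimpleGraph (Fin 4 × Fin 4) :=
  SimpleGraph.boxProd (⊤ : SimpleGraph (Fin 4)) (⊤ : SimpleGraph (Fin 4))

/-- The diagonal `C = {(x,x) : x ∈ [4]}` of the vertex set of `H(2,4)`. -/
def diagC : Finset (Fin 4 × Fin 4) := Finset.univ.filter fun p => p.1 = p.2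

/-- The Shrikhande graph, obtained from `H(2,4)` by Godsil–McKay switching with
respect to the partition `{C, V \ C}`. -/
def Shrikhande : SimpleGraph (Fin 4 × Fin 4) :=
  GMswitch H24 (fun _ : Fin 1 => diagC) diagCᶜ

/-- The Hamming graph `H(n,4)`, the Cartesian product of `n` copies of `K₄`. -/
def HamGraph (n : ℕ) : SimpleGraph (Fin n → Fin 4) where
  Adj f g := ∃ i, f i ≠ g i ∧ ∀ j, j ≠ i → f j = g j
  symm := by
    refine ⟨?_⟩
    rintro f g ⟨i, h1, h2⟩
    exact ⟨i, h1.symm, fun j hj => (h2 j hj).symm⟩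
  loopless := ⟨by rintro f ⟨i, h1, -⟩; exact h1 rfl⟩

lemma GMswitch_adj {V ι : Type*} (G : SimpleGraph V) (C : ι → Finset V) (D : Finset V)
    (x y : V) : (GMswitch G C D).Adj x y ↔ x ≠ y ∧ Xor' (G.Adj x y)
    (∃ i, (x ∈ D ∧ y ∈ C i ∧ 2 * nbrCount G x (C i) = (C i).card) ∨
          (y ∈ D ∧ x ∈ C i ∧ 2 * nbrCount G y (C i) = (C i).card)) := Iff.rfl

lemma diagC_card : diagC.card = 4 := by decide

lemma cnt_eq (n : ℕ) (x : Fin 4 × Fin 4) (w : Fin n → Fin 4) :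
    nbrCount (H24.boxProd (HamGraph n)) (x, w)
      (diagC ×ˢ ({w} : Finset (Fin n → Fin 4))) = nbrCount H24 x diagC := by
  unfold nbrCount
  have h : (diagC ×ˢ ({w} : Finset (Fin n → Fin 4))).filter
      (fun p => (H24.boxProd (HamGraph n)).Adj (x, w) p)
      = (diagC.filter fun y => H24.Adj x y) ×ˢ ({w} : Finset (Fin n → Fin 4)) := by
    ext ⟨y, u⟩
    simp only [Finset.mem_filter, Finset.mem_product, Finset.mem_singleton,
      SimpleGraph.boxProd_adj]
    constructor
    · rintro ⟨⟨hy, rfl⟩, h⟩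
      rcases h with ⟨h1, -⟩ | ⟨h2, -⟩
      · exact ⟨⟨hy, h1⟩, rfl⟩
      · exact absurd h2 ((HamGraph n).loopless.irrefl u)
    · rintro ⟨⟨hy, h⟩, rfl⟩
      exact ⟨⟨hy, rfl⟩, Or.inl ⟨h, rfl⟩⟩
  rw [h, Finset.card_product, Finset.card_singleton, mul_one]

lemma cnt_ne (n : ℕ) (x : Fin 4 × Fin 4) (hx : x ∉ diagC) (w u : Fin n → Fin 4)
    (hwu : w ≠ u) :
    nbrCount (H24.boxProd (HamGraph n)) (x, w)
      (diagC ×ˢ ({u} : Finset (Fin n → Fin 4))) = 0 := by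
  unfold nbrCount
  rw [Finset.card_eq_zero, Finset.filter_eq_empty_iff]
  rintro ⟨y, u'⟩ hm
  simp only [Finset.mem_product, Finset.mem_singleton] at hm
  obtain ⟨hy, rfl⟩ := hm
  simp only [SimpleGraph.boxProd_adj]
  rintro (⟨-, h⟩ | ⟨-, rfl⟩)
  · exact hwu h
  · exact hx hy

lemma switch_iff (n : ℕ) (x : Fin 4 × Fin 4) (hx : x ∉ diagC) (w u' : Fin n → Fin 4) :
    2 * nbrCount (H24.boxProd (HamGraph n)) (x, w)
        (diagC ×ˢ ({u'} : Finset (Fin n → Fin 4)))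
      = (diagC ×ˢ ({u'} : Finset (Fin n → Fin 4))).card
    ↔ w = u' ∧ 2 * nbrCount H24 x diagC = diagC.card := by
  have hcard : (diagC ×ˢ ({u'} : Finset (Fin n → Fin 4))).card = 4 := by
    rw [Finset.card_product, Finset.card_singleton, mul_one, diagC_card]
  by_cases hwu : w = u'
  · subst hwu
    rw [cnt_eq, hcard, diagC_card]
    simp
  · rw [cnt_ne n x hx w u' hwu, hcard]
    simp [hwu]

/-- the Doob graph `D(1,n) = Sh □ H(n,4)` is isomorphic to the
switch of `H(n+2,4) = H(2,4) □ H(n,4)` with respect to the induced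
Godsil–McKay partition. -/
theorem doob_one_n_eq_switch_hamming (n : ℕ) :
    Nonempty (SimpleGraph.boxProd Shrikhande (HamGraph n)
      ≃g GMswitch (SimpleGraph.boxProd H24 (HamGraph n))
          (fun c : Fin 1 × (Fin n → Fin 4) =>
            diagC ×ˢ ({c.2} : Finset (Fin n → Fin 4)))
          (diagCᶜ ×ˢ (Finset.univ : Finset (Fin n → Fin 4)))) := by
  refine ⟨⟨Equiv.refl _, ?_⟩⟩
  rintro ⟨x, w⟩ ⟨y, u⟩
  simp only [Equiv.refl_apply]
  rw [GMswitch_adj]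
  simp only [SimpleGraph.boxProd_adj]
  set S : Prop := (x ∈ diagCᶜ ∧ y ∈ diagC ∧ 2 * nbrCount H24 x diagC = diagC.card) ∨
      (y ∈ diagCᶜ ∧ x ∈ diagC ∧ 2 * nbrCount H24 y diagC = diagC.card) with hS
  have hEx : (∃ c : Fin 1 × (Fin n → Fin 4),
      ((x, w) ∈ diagCᶜ ×ˢ (Finset.univ : Finset (Fin n → Fin 4)) ∧
        (y, u) ∈ diagC ×ˢ ({c.2} : Finset (Fin n → Fin 4)) ∧
        2 * nbrCount (H24.boxProd (HamGraph n)) (x, w)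
          (diagC ×ˢ ({c.2} : Finset (Fin n → Fin 4)))
          = (diagC ×ˢ ({c.2} : Finset (Fin n → Fin 4))).card) ∨
      ((y, u) ∈ diagCᶜ ×ˢ (Finset.univ : Finset (Fin n → Fin 4)) ∧
        (x, w) ∈ diagC ×ˢ ({c.2} : Finset (Fin n → Fin 4)) ∧
        2 * nbrCount (H24.boxProd (HamGraph n)) (y, u)
          (diagC ×ˢ ({c.2} : Finset (Fin n → Fin 4)))
          = (diagC ×ˢ ({c.2} : Finset (Fin n → Fin 4))).card)) ↔ w = u ∧ S := by
    constructor
    · rintro ⟨c, ⟨hxD, hyC, hcnt⟩ | ⟨hyD, hxC, hcnt⟩⟩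
      · simp only [Finset.mem_product, Finset.mem_singleton, Finset.mem_univ,
          and_true] at hxD hyC
        have hx : x ∉ diagC := Finset.mem_compl.mp hxD
        obtain ⟨hwc, hn⟩ := (switch_iff n x hx w c.2).mp hcnt
        exact ⟨hwc.trans hyC.2.symm, Or.inl ⟨hxD, hyC.1, hn⟩⟩
      · simp only [Finset.mem_product, Finset.mem_singleton, Finset.mem_univ,
          and_true] at hyD hxC
        have hy : y ∉ diagC := Finset.mem_compl.mp hyD
        obtain ⟨huc, hn⟩ := (switch_iff n y hy u c.2).mp hcnt
        exact ⟨(huc.trans hxC.2.symm).symm, Or.inr ⟨hyD, hxC.1, hn⟩⟩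
    · rintro ⟨rfl, ⟨hxD, hyC, hn⟩ | ⟨hyD, hxC, hn⟩⟩
      · refine ⟨(0, w), Or.inl ⟨?_, ?_, ?_⟩⟩
        · simp [Finset.mem_product, hxD]
        · simp [Finset.mem_product, hyC]
        · exact (switch_iff n x (Finset.mem_compl.mp hxD) w w).mpr ⟨rfl, hn⟩
      · refine ⟨(0, w), Or.inr ⟨?_, ?_, ?_⟩⟩
        · simp [Finset.mem_product, hyD]
        · simp [Finset.mem_product, hxC]
        · exact (switch_iff n y (Finset.mem_compl.mp hyD) w w).mpr ⟨rfl, hn⟩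
  rw [hEx]
  have hSh : Shrikhande.Adj x y ↔ x ≠ y ∧ Xor' (H24.Adj x y) S := by
    rw [Shrikhande, GMswitch_adj]
    constructor
    · rintro ⟨hne, h⟩
      refine ⟨hne, ?_⟩
      rcases h with ⟨ha, hb⟩ | ⟨hb, ha⟩
      · exact Or.inl ⟨ha, fun hs => hb ⟨0, hs⟩⟩
      · obtain ⟨-, hs⟩ := hb
        exact Or.inr ⟨hs, ha⟩
    · rintro ⟨hne, h⟩
      refine ⟨hne, ?_⟩
      rcases h with ⟨ha, hb⟩ | ⟨hs, ha⟩
      · exact Or.inl ⟨ha, fun ⟨_, hs⟩ => hb hs⟩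
      · exact Or.inr ⟨⟨0, hs⟩, ha⟩
  rw [hSh]
  have hPne : H24.Adj x y → x ≠ y := fun h => h.ne
  have hQne : (HamGraph n).Adj w u → w ≠ u := fun h hwu => (HamGraph n).irrefl (hwu ▸ h)
  have hSne : S → x ≠ y := by
    rintro (⟨hx', hy', -⟩ | ⟨hy', hx', -⟩) rfl
    · exact Finset.mem_compl.mp hx' hy'
    · exact Finset.mem_compl.mp hy' hx'
  have hne_iff : ((x, w) ≠ (y, u)) ↔ ¬(x = y ∧ w = u) := by
    rw [ne_eq, Prod.mk.injEq]
  rw [hne_iff]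
  unfold Xor'
  constructor
  · rintro ⟨hne, (⟨(⟨hP, hwu⟩ | ⟨hQ, hxy⟩), hns⟩ | ⟨⟨hwu, hs⟩, hnb⟩)⟩
    · exact Or.inl ⟨⟨hPne hP, Or.inl ⟨hP, fun hs => hns ⟨hwu, hs⟩⟩⟩, hwu⟩
    · exact Or.inr ⟨hQ, hxy⟩
    · exact Or.inl ⟨⟨hSne hs, Or.inr ⟨hs, fun hP => hnb (Or.inl ⟨hP, hwu⟩)⟩⟩, hwu⟩
  · rintro (⟨⟨hxy, (⟨hP, hnS⟩ | ⟨hs, hnP⟩)⟩, hwu⟩ | ⟨hQ, hxy⟩)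
    · exact ⟨fun h => hxy h.1, Or.inl ⟨Or.inl ⟨hP, hwu⟩, fun h => hnS h.2⟩⟩
    · refine ⟨fun h => hxy h.1, Or.inr ⟨⟨hwu, hs⟩, ?_⟩⟩
      rintro (⟨hP, -⟩ | ⟨-, hxy'⟩)
      · exact hnP hP
      · exact hxy hxy'
    · refine ⟨fun h => hQne hQ h.2, Or.inl ⟨Or.inr ⟨hQ, hxy⟩, fun h => hQne hQ h.1⟩⟩
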